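/- Let D be a finite distributive lattice generated (as a lattice) by elements g₁, …, g_n. Then every join-irreducible element of D is a meet of some nonempty subset of {g₁, …, g_n}. -/

import Mathlib

theorem supIrred_finset_sup'_aux {α β : Type*} [SemilatticeSup α] {u : α} (hu : SupIrred u) :
    ∀ (t : Finset β), ∀ (ht : t.Nonempty) (f : β → α), t.sup' ht f = u → ∃ b ∈ t, f b = u := by
  intro t
  induction t using Finset.cons_induction with
  | empty => intro ht; exact absurd ht (by simp)
  | cons a t ha ih =>
    intro ht f h
    rcases t.eq_empty_or_nonempty with rfl | ht'
    · exact ⟨a, by simp, by simpa using h⟩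
    · rw [Finset.sup'_cons ht'] at h
      rcases hu.2 h with h' | h'
      · exact ⟨a, Finset.mem_cons_self _ _, h'⟩
      · obtain ⟨b, hb, hb'⟩ := ih ht' f h'
        exact ⟨b, Finset.mem_cons_of_mem hb, hb'⟩

/-- If a finite distributive lattice `D` is generated (as a lattice) by
`g 1, …, g n`, then every join-irreducible element of `D` is the meet of a
nonempty subset of the generators. -/
theorem stmt_7 (D : Type*) [DistribLattice D] [Fintype D] (n : ℕ) (g : Fin n → D)
    (hgen : ∀ L : Sublattice D, (∀ i : Fin n, g i ∈ L) → ∀ x : D, x ∈ L) :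
    ∀ u : D, SupIrred u → ∃ s : Finset (Fin n), ∃ hs : s.Nonempty, u = s.inf' hs g := by
  classical
  intro u hu
  have hall : u ∈ latticeClosure (Set.range g) := by
    refine hgen ⟨latticeClosure (Set.range g), isSublattice_latticeClosure.1,
      isSublattice_latticeClosure.2⟩ (fun i => subset_latticeClosure ⟨i, rfl⟩) u
  rw [← supClosure_infClosure] at hall
  obtain ⟨t, ht, hts, hsup⟩ := hall
  obtain ⟨b, hb, hbu⟩ := supIrred_finset_sup'_aux hu t ht id hsup
  have hbu' : b = u := hbu
  subst hbu'
  obtain ⟨t', ht', hts', hinf⟩ := hts hb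
  have hc : ∀ x ∈ t', ∃ i, g i = x := fun x hx => hts' hx
  refine ⟨t'.attach.image (fun x => (hc x.1 x.2).choose), (ht'.attach).image _, ?_⟩
  rw [Finset.inf'_image, ← hinf]
  apply le_antisymm
  · refine Finset.le_inf' _ _ fun x _ => ?_
    have hx : g (hc x.1 x.2).choose = x.1 := (hc x.1 x.2).choose_spec
    simpa [Function.comp_def, hx, id] using Finset.inf'_le (fun y : D => y) x.2
  · refine Finset.le_inf' _ _ fun b hb => ?_
    have hx : g (hc b hb).choose = b := (hc b hb).choose_spec
    simpa [Function.comp_def, hx] using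
      Finset.inf'_le ((fun i => g i) ∘ fun x : {x // x ∈ t'} => (hc x.1 x.2).choose)
        (Finset.mem_attach t' ⟨b, hb⟩)
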